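/- Let C be a Type I binary self-dual code of length n with doubly-even subcode C₀ and shadow S. Then every element of the shadow S has weight congruent to n/2 modulo 4. -/

import Mathlib

open Finset

/-- Hamming weight of a binary vector. -/
def wt {n : ℕ} (v : Fin n → ZMod 2) : ℕ := (Finset.univ.filter (fun i => v i ≠ 0)).card

/-- Standard inner product over GF(2). -/
def inn {n : ℕ} (u v : Fin n → ZMod 2) : ZMod 2 := ∑ i, u i * v i

/-- A code is self-dual if it equals its dual. -/
def IsSelfDual {n : ℕ} (C : Submodule (ZMod 2) (Fin n → ZMod 2)) : Prop :=
  ∀ v, v ∈ C ↔ ∀ c ∈ C, inn v c = 0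

/-- `C` has minimum distance (weight) `d`. -/
def HasMinDist {n : ℕ} (C : Submodule (ZMod 2) (Fin n → ZMod 2)) (d : ℕ) : Prop :=
  (∃ c ∈ C, c ≠ 0 ∧ wt c = d) ∧ ∀ c ∈ C, c ≠ 0 → d ≤ wt c

/-- The shadow `S = C₀^⊥ \ C`, where `C₀` is the doubly-even subcode of `C`. -/
def shadow {n : ℕ} (C : Submodule (ZMod 2) (Fin n → ZMod 2)) : Set (Fin n → ZMod 2) :=
  {v | ∀ c ∈ C, wt c % 4 = 0 → inn v c = 0} \ (C : Set (Fin n → ZMod 2))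

/-- Covering radius of a code. -/
noncomputable def coveringRadius {n : ℕ} (C : Submodule (ZMod 2) (Fin n → ZMod 2)) : ℕ :=
  sInf {R | ∀ v : Fin n → ZMod 2, ∃ c ∈ C, wt (v - c) ≤ R}

/-- Prepend two coordinates to a vector. -/
def vcons2 {k : ℕ} (a b : ZMod 2) (v : Fin k → ZMod 2) : Fin (k + 2) → ZMod 2 :=
  Fin.cons a (Fin.cons b v)


/-! ### Auxiliary lemmas -/

noncomputable def eps (a : ZMod 2) : ℂ := if a = 0 then 1 else -1

lemma eps_zero : eps 0 = 1 := by simp [eps]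
lemma eps_one : eps 1 = -1 := by norm_num [eps]

lemma eps_add (a b : ZMod 2) : eps (a + b) = eps a * eps b := by
  rcases (by decide : ∀ x : ZMod 2, x = 0 ∨ x = 1) a with rfl | rfl <;>
    rcases (by decide : ∀ x : ZMod 2, x = 0 ∨ x = 1) b with rfl | rfl <;>
    simp [eps, show ((1 : ZMod 2) + 1) = 0 from by decide]

lemma eps_sq (a : ZMod 2) : eps a * eps a = 1 := by
  rcases (by decide : ∀ x : ZMod 2, x = 0 ∨ x = 1) a with rfl | rfl <;> norm_num [eps]

lemma eps_sum {ι : Type*} (s : Finset ι) (f : ι → ZMod 2) :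
    eps (∑ i ∈ s, f i) = ∏ i ∈ s, eps (f i) := by
  classical
  induction s using Finset.induction_on with
  | empty => simp [eps_zero]
  | insert _ _ h ih => rename_i a s; simp [Finset.sum_insert h, Finset.prod_insert h, eps_add, ih]

lemma neg_one_pow_nat (p : ℕ) : (-1 : ℂ) ^ p = eps (p : ZMod 2) := by
  induction p with
  | zero => simp [eps_zero]
  | succ k ih => rw [pow_succ, ih, Nat.cast_succ, eps_add, eps_one]

def ovl {n : ℕ} (u v : Fin n → ZMod 2) : ℕ :=
  (Finset.univ.filter (fun i => u i ≠ 0 ∧ v i ≠ 0)).card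

lemma wt_eq_sum {n : ℕ} (v : Fin n → ZMod 2) : wt v = ∑ i, (v i).val := by
  rw [wt, Finset.card_filter]
  refine Finset.sum_congr rfl fun i _ => ?_
  generalize v i = a; revert a; decide

lemma wt_add_ovl {n : ℕ} (u v : Fin n → ZMod 2) :
    wt (u + v) + 2 * ovl u v = wt u + wt v := by
  rw [wt_eq_sum, wt_eq_sum, wt_eq_sum, ovl, Finset.card_filter, Finset.mul_sum,
    ← Finset.sum_add_distrib, ← Finset.sum_add_distrib]
  refine Finset.sum_congr rfl fun i _ => ?_
  simp only [Pi.add_apply]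
  generalize u i = a; generalize v i = b; revert a b; decide

lemma ovl_cast {n : ℕ} (u v : Fin n → ZMod 2) : ((ovl u v : ℕ) : ZMod 2) = inn u v := by
  rw [ovl, Finset.card_filter, inn, Nat.cast_sum]
  refine Finset.sum_congr rfl fun i _ => ?_
  generalize u i = a; generalize v i = b; revert a b; decide

lemma wt_cast {n : ℕ} (v : Fin n → ZMod 2) : ((wt v : ℕ) : ZMod 2) = inn v v := by
  rw [wt_eq_sum, inn, Nat.cast_sum]
  refine Finset.sum_congr rfl fun i _ => ?_
  generalize v i = a; revert a; decide

lemma inn_add_left {n : ℕ} (u v w : Fin n → ZMod 2) :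
    inn (u + v) w = inn u w + inn v w := by
  simp [inn, add_mul, Finset.sum_add_distrib]

lemma inn_add_right {n : ℕ} (u v w : Fin n → ZMod 2) :
    inn u (v + w) = inn u v + inn u w := by
  simp [inn, mul_add, Finset.sum_add_distrib]

lemma zmod2_cast_eq_zero (p : ℕ) : ((p : ZMod 2) = 0) ↔ p % 2 = 0 := by
  rw [ZMod.natCast_eq_zero_iff, Nat.dvd_iff_mod_eq_zero]

lemma coord_sum (b : ZMod 2) :
    ∑ a : ZMod 2, Complex.I ^ a.val * eps (a * b)
      = (1 + Complex.I) * (if b ≠ 0 then -Complex.I else 1) := by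
  have huniv : (Finset.univ : Finset (ZMod 2)) = {0, 1} := by decide
  rw [huniv, Finset.sum_pair (by decide : (0 : ZMod 2) ≠ 1)]
  rcases (by decide : ∀ x : ZMod 2, x = 0 ∨ x = 1) b with rfl | rfl <;>
    simp [eps, Complex.I_sq, show ((0:ZMod 2)).val = 0 from rfl,
      show ((1:ZMod 2)).val = 1 from rfl] <;> ring_nf <;> simp [Complex.I_sq] <;> ring

set_option maxHeartbeats 1000000 in
lemma sumA {n : ℕ} (c : Fin n → ZMod 2) :
    ∑ u : Fin n → ZMod 2, Complex.I ^ wt u * eps (inn u c)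
      = (1 + Complex.I) ^ n * (-Complex.I) ^ wt c := by
  have step1 : ∀ u : Fin n → ZMod 2,
      Complex.I ^ wt u * eps (inn u c) = ∏ j, (Complex.I ^ (u j).val * eps (u j * c j)) := by
    intro u
    rw [wt_eq_sum, inn, eps_sum, ← Finset.prod_pow_eq_pow_sum, ← Finset.prod_mul_distrib]
  calc ∑ u : Fin n → ZMod 2, Complex.I ^ wt u * eps (inn u c)
      = ∑ u ∈ Fintype.piFinset (fun _ : Fin n => (Finset.univ : Finset (ZMod 2))),
          ∏ j, (Complex.I ^ (u j).val * eps (u j * c j)) := by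
        rw [Fintype.piFinset_univ]
        exact Finset.sum_congr rfl (fun u _ => step1 u)
    _ = ∏ j, ∑ a : ZMod 2, Complex.I ^ a.val * eps (a * c j) :=
        (Finset.prod_univ_sum (fun _ : Fin n => (Finset.univ : Finset (ZMod 2)))
          (fun j a => Complex.I ^ a.val * eps (a * c j))).symm
    _ = ∏ j, ((1 + Complex.I) * (if c j ≠ 0 then -Complex.I else 1)) :=
        Finset.prod_congr rfl (fun j _ => coord_sum (c j))
    _ = (1 + Complex.I) ^ n * ∏ j, (if c j ≠ 0 then -Complex.I else 1) := by
        rw [Finset.prod_mul_distrib, Finset.prod_const, Finset.card_univ, Fintype.card_fin]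
    _ = (1 + Complex.I) ^ n * (-Complex.I) ^ wt c := by
        rw [Finset.prod_ite, Finset.prod_const, Finset.prod_const, one_pow, mul_one, wt]

lemma charSum_zero {n : ℕ} (Cf : Finset (Fin n → ZMod 2))
    (hadd : ∀ a ∈ Cf, ∀ b ∈ Cf, a + b ∈ Cf)
    (χ : (Fin n → ZMod 2) → ZMod 2)
    (hχ : ∀ a ∈ Cf, ∀ b ∈ Cf, χ (a + b) = χ a + χ b)
    (hne : ∃ c ∈ Cf, χ c ≠ 0) :
    ∑ c ∈ Cf, eps (χ c) = 0 := by
  obtain ⟨c₀, hc₀, hχ₀⟩ := hne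
  have hself : ∀ v : Fin n → ZMod 2, v + v = 0 := by
    intro v; funext i
    have : ∀ a : ZMod 2, a + a = 0 := by decide
    exact this (v i)
  have h1 : χ c₀ = 1 := by
    have : ∀ a : ZMod 2, a ≠ 0 → a = 1 := by decide
    exact this _ hχ₀
  have hbij : ∑ c ∈ Cf, eps (χ c) = ∑ c ∈ Cf, eps (χ (c + c₀)) := by
    refine Finset.sum_nbij' (fun c => c + c₀) (fun c => c + c₀) ?_ ?_ ?_ ?_ ?_
    · intro a ha; exact hadd a ha c₀ hc₀
    · intro a ha; exact hadd a ha c₀ hc₀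
    · intro a _; show a + c₀ + c₀ = a; rw [add_assoc, hself, add_zero]
    · intro a _; show a + c₀ + c₀ = a; rw [add_assoc, hself, add_zero]
    · intro a _; show eps (χ a) = eps (χ (a + c₀ + c₀))
      rw [add_assoc, hself, add_zero]
  have heq : ∀ c ∈ Cf, eps (χ (c + c₀)) = -eps (χ c) := by
    intro c hc
    rw [hχ c hc c₀ hc₀, h1, eps_add, eps_one, mul_neg_one]
  rw [Finset.sum_congr rfl heq, Finset.sum_neg_distrib] at hbij
  linear_combination hbij / 2

lemma Ipow_mod4 (k : ℕ) : Complex.I ^ k = Complex.I ^ (k % 4) := by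
  conv_lhs => rw [← Nat.div_add_mod k 4]
  rw [pow_add, pow_mul, Complex.I_pow_four, one_pow, one_mul]

theorem stmt_4 (m : ℕ)
    (C : Submodule (ZMod 2) (Fin (2*m) → ZMod 2))
    (hsd : IsSelfDual C) (hT : ∃ c ∈ C, wt c % 4 = 2) :
    ∀ y ∈ shadow C, wt y % 4 = m % 4 := by
  classical
  intro y hy
  obtain ⟨hy1, hy2⟩ := hy
  set Cf : Finset (Fin (2*m) → ZMod 2) := Finset.univ.filter (· ∈ C) with hCf
  have memCf : ∀ c, c ∈ Cf ↔ c ∈ C := by intro c; simp [hCf]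
  have hselfinv : ∀ v : Fin (2*m) → ZMod 2, v + v = 0 := by
    intro v; funext i
    have h : ∀ a : ZMod 2, a + a = 0 := by decide
    exact h (v i)
  have hZself : ∀ a : ZMod 2, a + a = 0 := by decide
  have hortho : ∀ c ∈ C, ∀ c' ∈ C, inn c c' = 0 := fun c hc c' hc' => (hsd c).mp hc c' hc'
  have heven : ∀ c ∈ C, wt c % 2 = 0 := by
    intro c hc
    have h := wt_cast c
    rw [hortho c hc c hc] at h
    exact (zmod2_cast_eq_zero _).mp h
  set φ : (Fin (2*m) → ZMod 2) → ZMod 2 := fun c => ((wt c / 2 : ℕ) : ZMod 2) with hφ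
  have hφ_iff : ∀ c ∈ C, (φ c = 0 ↔ wt c % 4 = 0) := by
    intro c hc
    have h2 := heven c hc
    rw [hφ]; simp only
    rw [zmod2_cast_eq_zero]
    omega
  have hφadd : ∀ a ∈ C, ∀ b ∈ C, φ (a + b) = φ a + φ b := by
    intro a ha b hb
    have h1 := wt_add_ovl a b
    have h2 := ovl_cast a b
    rw [hortho a ha b hb] at h2
    have hk : ovl a b % 2 = 0 := (zmod2_cast_eq_zero _).mp h2
    have ha2 := heven a ha
    have hb2 := heven b hb
    have hab2 := heven (a + b) (C.add_mem ha hb)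
    have hmod : wt (a + b) / 2 % 2 = (wt a / 2 + wt b / 2) % 2 := by omega
    rw [hφ]; simp only
    rw [← ZMod.natCast_mod, hmod, ZMod.natCast_mod, Nat.cast_add]
  -- shadow characterization
  have hkey : ∀ c ∈ C, inn y c = φ c := by
    by_contra hcon
    push_neg at hcon
    obtain ⟨c₁, hc₁, hne₁⟩ := hcon
    have hzo : ∀ a : ZMod 2, a ≠ 1 → a = 0 := by decide
    have hzo' : ∀ a : ZMod 2, a ≠ 0 → a = 1 := by decide
    have hφc₁ : φ c₁ = 1 := by
      by_contra h
      have h0 : φ c₁ = 0 := hzo _ h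
      have := hy1 c₁ hc₁ ((hφ_iff c₁ hc₁).mp h0)
      rw [this, h0] at hne₁
      exact hne₁ rfl
    have hinn₁ : inn y c₁ = 0 := hzo _ (by rw [hφc₁] at hne₁; exact hne₁)
    have hyC : y ∈ C := by
      rw [hsd]
      intro c hc
      by_cases hcase : φ c = 0
      · exact hy1 c hc ((hφ_iff c hc).mp hcase)
      · have hφc : φ c = 1 := hzo' _ hcase
        have hcc₁ : c + c₁ ∈ C := C.add_mem hc hc₁
        have hφsum : φ (c + c₁) = 0 := by
          rw [hφadd c hc c₁ hc₁, hφc, hφc₁]; decide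
        have h0 : inn y (c + c₁) = 0 := hy1 _ hcc₁ ((hφ_iff _ hcc₁).mp hφsum)
        rw [inn_add_right, hinn₁, add_zero] at h0
        exact h0
    exact hy2 hyC
  set Sf : Finset (Fin (2*m) → ZMod 2) :=
    Finset.univ.filter (fun u => ∀ c ∈ C, inn u c = φ c) with hSf
  have hySf : y ∈ Sf := by
    rw [hSf, Finset.mem_filter]
    exact ⟨Finset.mem_univ _, hkey⟩
  -- all elements of Sf have the same weight mod 4
  have hwt_eq : ∀ u ∈ Sf, wt u % 4 = wt y % 4 := by
    intro u hu
    rw [hSf, Finset.mem_filter] at hu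
    have hu' := hu.2
    have hcC : u + y ∈ C := by
      rw [hsd]
      intro c hc
      rw [inn_add_left, hu' c hc, hkey c hc]
      exact hZself _
    set c : Fin (2*m) → ZMod 2 := u + y with hc
    have hu_eq : y + c = u := by
      rw [hc, add_comm u y, ← add_assoc, hselfinv y, zero_add]
    have h1 := wt_add_ovl y c
    rw [hu_eq] at h1
    have h2 := ovl_cast y c
    rw [hkey c hcC] at h2
    have h3 : ovl y c % 2 = wt c / 2 % 2 := by
      have := (ZMod.natCast_eq_natCast_iff _ _ _).mp (h2 : ((ovl y c : ℕ) : ZMod 2) = ((wt c / 2 : ℕ) : ZMod 2))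
      exact this
    have h4 := heven c hcC
    omega
  -- character sums
  have hCfadd : ∀ a ∈ Cf, ∀ b ∈ Cf, a + b ∈ Cf := by
    intro a ha b hb
    rw [memCf] at ha hb ⊢
    exact C.add_mem ha hb
  have h0Cf : (0 : Fin (2*m) → ZMod 2) ∈ Cf := (memCf 0).mpr C.zero_mem
  have hcard_pos : 0 < Cf.card := Finset.card_pos.mpr ⟨0, h0Cf⟩
  have innerSum : ∀ u : Fin (2*m) → ZMod 2,
      ∑ c ∈ Cf, eps (inn u c + φ c) = if u ∈ Sf then (Cf.card : ℂ) else 0 := by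
    intro u
    by_cases hu : u ∈ Sf
    · rw [if_pos hu]
      rw [hSf, Finset.mem_filter] at hu
      have hone : ∀ c ∈ Cf, eps (inn u c + φ c) = 1 := by
        intro c hc
        rw [hu.2 c ((memCf c).mp hc), hZself, eps_zero]
      rw [Finset.sum_congr rfl hone, Finset.sum_const, nsmul_eq_mul, mul_one]
    · rw [if_neg hu]
      refine charSum_zero Cf hCfadd (fun c => inn u c + φ c) ?_ ?_
      · intro a ha b hb
        show inn u (a + b) + φ (a + b) = (inn u a + φ a) + (inn u b + φ b)
        rw [inn_add_right, hφadd a ((memCf a).mp ha) b ((memCf b).mp hb)]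
        ring
      · by_contra hno
        push_neg at hno
        apply hu
        rw [hSf, Finset.mem_filter]
        refine ⟨Finset.mem_univ _, fun c hc => ?_⟩
        have h := hno c ((memCf c).mpr hc)
        have hz : ∀ a b : ZMod 2, a + b = 0 → a = b := by decide
        exact hz _ _ h
  -- the double sum, two ways
  set T : ℂ := ∑ u : Fin (2*m) → ZMod 2, ∑ c ∈ Cf, Complex.I ^ wt u * eps (inn u c + φ c)
    with hT'
  have way1 : T = (Cf.card : ℂ) * ∑ u ∈ Sf, Complex.I ^ wt u := by
    rw [hT']
    have hstep : ∀ u : Fin (2*m) → ZMod 2,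
        ∑ c ∈ Cf, Complex.I ^ wt u * eps (inn u c + φ c)
          = if u ∈ Sf then Complex.I ^ wt u * (Cf.card : ℂ) else 0 := by
      intro u
      rw [← Finset.mul_sum, innerSum u]
      by_cases hu : u ∈ Sf <;> simp [hu]
    rw [Finset.sum_congr rfl (fun u _ => hstep u), Finset.sum_ite_mem,
      Finset.univ_inter, ← Finset.sum_mul, mul_comm]
  have way2 : T = (Cf.card : ℂ) * (1 + Complex.I) ^ (2*m) := by
    rw [hT', Finset.sum_comm]
    have hstep : ∀ c ∈ Cf,
        ∑ u : Fin (2*m) → ZMod 2, Complex.I ^ wt u * eps (inn u c + φ c)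
          = (1 + Complex.I) ^ (2*m) := by
      intro c hc
      have hcC := (memCf c).mp hc
      have hsplit : ∀ u : Fin (2*m) → ZMod 2,
          Complex.I ^ wt u * eps (inn u c + φ c)
            = (Complex.I ^ wt u * eps (inn u c)) * eps (φ c) := by
        intro u; rw [eps_add]; ring
      rw [Finset.sum_congr rfl (fun u _ => hsplit u), ← Finset.sum_mul, sumA c]
      have h2 : wt c = 2 * (wt c / 2) := by have := heven c hcC; omega
      have hneg : (-Complex.I) ^ wt c = eps (φ c) := by
        conv_lhs => rw [h2]
        rw [pow_mul]
        have hI2 : (-Complex.I) ^ 2 = -1 := by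
          rw [neg_pow, Complex.I_sq]; norm_num
        rw [hI2, neg_one_pow_nat]
      rw [hneg, mul_assoc, eps_sq, mul_one]
    rw [Finset.sum_congr rfl hstep, Finset.sum_const, nsmul_eq_mul]
  have hcard_ne : ((Cf.card : ℂ)) ≠ 0 :=
    Nat.cast_ne_zero.mpr (Nat.pos_iff_ne_zero.mp hcard_pos)
  have hmain : ∑ u ∈ Sf, Complex.I ^ wt u = (1 + Complex.I) ^ (2*m) :=
    mul_left_cancel₀ hcard_ne (way1.symm.trans way2)
  -- evaluate both sides
  have hrhs : (1 + Complex.I) ^ (2*m) = (2:ℂ) ^ m * Complex.I ^ m := by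
    rw [pow_mul]
    have hsq : (1 + Complex.I) ^ 2 = 2 * Complex.I := by
      have := Complex.I_sq
      ring_nf
      rw [Complex.I_sq]
      ring
    rw [hsq, mul_pow]
  have hlhs : ∑ u ∈ Sf, Complex.I ^ wt u = (Sf.card : ℂ) * Complex.I ^ (wt y % 4) := by
    have hc : ∀ u ∈ Sf, Complex.I ^ wt u = Complex.I ^ (wt y % 4) := by
      intro u hu; rw [Ipow_mod4, hwt_eq u hu]
    rw [Finset.sum_congr rfl hc, Finset.sum_const, nsmul_eq_mul]
  have hfinal : (Sf.card : ℂ) * Complex.I ^ (wt y % 4) = (2:ℂ) ^ m * Complex.I ^ (m % 4) := by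
    rw [← hlhs, hmain, hrhs, Ipow_mod4 m]
  have hs_pos : 0 < Sf.card := Finset.card_pos.mpr ⟨y, hySf⟩
  have hsR : (0:ℝ) < (Sf.card : ℝ) := by exact_mod_cast hs_pos
  have h2m : (0:ℝ) < 2 ^ m := by positivity
  have h2c : (2:ℂ) ^ m = (((2:ℝ) ^ m : ℝ) : ℂ) := by push_cast; ring
  have hre : ((2:ℂ) ^ m).re = (2:ℝ) ^ m := by rw [h2c, Complex.ofReal_re]
  have him : ((2:ℂ) ^ m).im = 0 := by rw [h2c, Complex.ofReal_im]
  have ha4 : wt y % 4 < 4 := Nat.mod_lt _ (by norm_num)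
  have hb4 : m % 4 < 4 := Nat.mod_lt _ (by norm_num)
  set a := wt y % 4 with ha_def
  set b := m % 4 with hb_def
  clear_value a b
  interval_cases a <;> interval_cases b <;>
    first
      | rfl
      | (exfalso
         rw [Complex.ext_iff] at hfinal
         simp only [pow_zero, pow_succ, one_mul, Complex.mul_re, Complex.mul_im,
           Complex.I_re, Complex.I_im, Complex.one_re, Complex.one_im,
           Complex.natCast_re, Complex.natCast_im, mul_zero, mul_one, zero_mul,
           zero_sub, sub_zero, zero_add, add_zero, neg_neg, neg_zero] at hfinal
         obtain ⟨hf1, hf2⟩ := hfinal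
         linarith [hsR, h2m, hre, him, hf1, hf2])
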